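/- For every integer n ≥ 2 and all integers ℓ, u ≥ 0, the counts A satisfy the recursion A(n,ℓ,u) = A(n−1,ℓ−1,u) + A(n−1,ℓ,u−1) + (n−2)·A(n−1,ℓ,u), where any term A(n−1,·,·) with a negative argument is taken to be 0. -/

import Mathlib

set_option maxHeartbeats 1000000

open Finset

/-- `π j` is a lower record: it is the minimum among the first `j+1` entries. -/
def isLowerRecord {n : ℕ} (π : Equiv.Perm (Fin n)) (j : Fin n) : Prop :=
  ∀ k, k ≤ j → π j ≤ π k

/-- `π j` is an upper record: it is the maximum among the first `j+1` entries. -/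
def isUpperRecord {n : ℕ} (π : Equiv.Perm (Fin n)) (j : Fin n) : Prop :=
  ∀ k, k ≤ j → π k ≤ π j

instance {n : ℕ} (π : Equiv.Perm (Fin n)) (j : Fin n) : Decidable (isLowerRecord π j) :=
  inferInstanceAs (Decidable (∀ k, k ≤ j → π j ≤ π k))

instance {n : ℕ} (π : Equiv.Perm (Fin n)) (j : Fin n) : Decidable (isUpperRecord π j) :=
  inferInstanceAs (Decidable (∀ k, k ≤ j → π k ≤ π j))

/-- number of proper (position ≥ 2, i.e. index ≥ 1) lower records -/
def properLowerCount {n : ℕ} (π : Equiv.Perm (Fin n)) : ℕ :=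
  (univ.filter fun j : Fin n => 0 < j.val ∧ isLowerRecord π j).card

/-- number of proper (position ≥ 2, i.e. index ≥ 1) upper records -/
def properUpperCount {n : ℕ} (π : Equiv.Perm (Fin n)) : ℕ :=
  (univ.filter fun j : Fin n => 0 < j.val ∧ isUpperRecord π j).card

/-- `A n ℓ u` = number of permutations of `{1,…,n}` with exactly `ℓ` proper lower
records and exactly `u` proper upper records. -/
def A (n ℓ u : ℕ) : ℕ :=
  (univ.filter fun π : Equiv.Perm (Fin n) =>
    properLowerCount π = ℓ ∧ properUpperCount π = u).card

namespace RecAux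

variable {m : ℕ}

/-- insert value `v` at the last position of (the pattern) `σ`. -/
def ins (σ : Equiv.Perm (Fin m)) (v : Fin (m + 1)) : Equiv.Perm (Fin (m + 1)) :=
  (finSuccEquiv' (Fin.last m)).trans ((σ.optionCongr).trans (finSuccEquiv' v).symm)

@[simp] lemma ins_last (σ : Equiv.Perm (Fin m)) (v : Fin (m + 1)) :
    ins σ v (Fin.last m) = v := by
  simp [ins, finSuccEquiv'_at]

@[simp] lemma ins_castSucc (σ : Equiv.Perm (Fin m)) (v : Fin (m + 1)) (j : Fin m) :
    ins σ v j.castSucc = v.succAbove (σ j) := by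
  simp [ins, finSuccEquiv'_last_apply_castSucc]

lemma lr_castSucc (σ : Equiv.Perm (Fin m)) (v : Fin (m + 1)) (j : Fin m) :
    isLowerRecord (ins σ v) j.castSucc ↔ isLowerRecord σ j := by
  constructor
  · intro h k hk
    have := h k.castSucc (by simpa [Fin.castSucc_le_castSucc_iff] using hk)
    simpa [Fin.succAbove_le_succAbove_iff] using this
  · intro h k hk
    have hkl : k ≠ Fin.last m := by
      rintro rfl
      exact absurd (lt_of_le_of_lt hk (Fin.castSucc_lt_last j)) (lt_irrefl _)
    obtain ⟨k', rfl⟩ := Fin.exists_castSucc_eq.mpr hkl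
    have hk' : k' ≤ j := by simpa [Fin.castSucc_le_castSucc_iff] using hk
    simpa [Fin.succAbove_le_succAbove_iff] using h k' hk'

lemma ur_castSucc (σ : Equiv.Perm (Fin m)) (v : Fin (m + 1)) (j : Fin m) :
    isUpperRecord (ins σ v) j.castSucc ↔ isUpperRecord σ j := by
  constructor
  · intro h k hk
    have := h k.castSucc (by simpa [Fin.castSucc_le_castSucc_iff] using hk)
    simpa [Fin.succAbove_le_succAbove_iff] using this
  · intro h k hk
    have hkl : k ≠ Fin.last m := by
      rintro rfl
      exact absurd (lt_of_le_of_lt hk (Fin.castSucc_lt_last j)) (lt_irrefl _)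
    obtain ⟨k', rfl⟩ := Fin.exists_castSucc_eq.mpr hkl
    have hk' : k' ≤ j := by simpa [Fin.castSucc_le_castSucc_iff] using hk
    simpa [Fin.succAbove_le_succAbove_iff] using h k' hk'

lemma lr_last (σ : Equiv.Perm (Fin m)) (v : Fin (m + 1)) :
    isLowerRecord (ins σ v) (Fin.last m) ↔ v = 0 := by
  constructor
  · intro h
    have := h ((ins σ v).symm 0) (Fin.le_last _)
    rw [ins_last, Equiv.apply_symm_apply] at this
    exact Fin.le_zero_iff.mp this
  · rintro rfl k _
    rw [ins_last]
    exact Fin.zero_le _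

lemma ur_last (σ : Equiv.Perm (Fin m)) (v : Fin (m + 1)) :
    isUpperRecord (ins σ v) (Fin.last m) ↔ v = Fin.last m := by
  constructor
  · intro h
    have := h ((ins σ v).symm (Fin.last m)) (Fin.le_last _)
    rw [ins_last, Equiv.apply_symm_apply] at this
    exact Fin.last_le_iff.mp this
  · rintro rfl k _
    rw [ins_last]
    exact Fin.le_last _

lemma plc_ins (hm : 0 < m) (σ : Equiv.Perm (Fin m)) (v : Fin (m + 1)) :
    properLowerCount (ins σ v) = properLowerCount σ + (if v = 0 then 1 else 0) := by
  rw [properLowerCount, properLowerCount, Finset.card_filter, Finset.card_filter,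
    Fin.sum_univ_castSucc]
  congr 1
  · apply Finset.sum_congr rfl
    intro j _
    simp [lr_castSucc]
  · simp [lr_last, hm]

lemma puc_ins (hm : 0 < m) (σ : Equiv.Perm (Fin m)) (v : Fin (m + 1)) :
    properUpperCount (ins σ v) = properUpperCount σ + (if v = Fin.last m then 1 else 0) := by
  rw [properUpperCount, properUpperCount, Finset.card_filter, Finset.card_filter,
    Fin.sum_univ_castSucc]
  congr 1
  · apply Finset.sum_congr rfl
    intro j _
    simp [ur_castSucc]
  · simp [ur_last, hm]

lemma ins_bijective :
    Function.Bijective (fun p : Equiv.Perm (Fin m) × Fin (m + 1) => ins p.1 p.2) := by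
  rw [Fintype.bijective_iff_injective_and_card]
  constructor
  · rintro ⟨σ, v⟩ ⟨σ', v'⟩ h
    simp only at h
    have hv : v = v' := by
      have := congrArg (fun π : Equiv.Perm (Fin (m+1)) => π (Fin.last m)) h
      simpa using this
    subst hv
    refine Prod.ext ?_ rfl
    ext j
    have := congrArg (fun π : Equiv.Perm (Fin (m+1)) => π j.castSucc) h
    simp only [ins_castSucc] at this
    exact congrArg Fin.val (Fin.succAbove_right_injective this)
  · simp [Fintype.card_perm, Nat.factorial_succ, mul_comm]

end RecAux

lemma key_rec (m ℓ u : ℕ) (hm : 1 ≤ m) :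
    A (m + 1) ℓ u = (if 1 ≤ ℓ then A m (ℓ - 1) u else 0)
      + (if 1 ≤ u then A m ℓ (u - 1) else 0) + (m - 1) * A m ℓ u := by
  classical
  set P : Equiv.Perm (Fin (m + 1)) → Prop :=
    fun π => properLowerCount π = ℓ ∧ properUpperCount π = u with hP
  let E : Equiv.Perm (Fin m) × Fin (m + 1) ≃ Equiv.Perm (Fin (m + 1)) :=
    Equiv.ofBijective _ (RecAux.ins_bijective (m := m))
  have hEapp : ∀ p : Equiv.Perm (Fin m) × Fin (m + 1), E p = RecAux.ins p.1 p.2 :=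
    fun _ => rfl
  -- step 1: transfer the count to the product
  have step1 : A (m + 1) ℓ u =
      (univ.filter fun p : Equiv.Perm (Fin m) × Fin (m + 1) =>
        P (RecAux.ins p.1 p.2)).card := by
    rw [A]
    refine Finset.card_bij' (fun π _ => E.symm π) (fun p _ => RecAux.ins p.1 p.2) ?_ ?_ ?_ ?_
    · intro π hπ
      simp only [Finset.mem_filter, Finset.mem_univ, true_and] at hπ ⊢
      have : RecAux.ins (E.symm π).1 (E.symm π).2 = π := by
        rw [← hEapp]; exact E.apply_symm_apply π
      rw [this]; exact hπ
    · intro p hp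
      simp only [Finset.mem_filter, Finset.mem_univ, true_and] at hp ⊢
      exact hp
    · intro π _
      exact E.apply_symm_apply π
    · intro p _
      exact E.symm_apply_apply p
  -- step 2: rewrite the predicate using the insertion lemmas
  have step2 : ∀ p : Equiv.Perm (Fin m) × Fin (m + 1),
      P (RecAux.ins p.1 p.2) ↔
        (properLowerCount p.1 + (if p.2 = 0 then 1 else 0) = ℓ ∧
         properUpperCount p.1 + (if p.2 = Fin.last m then 1 else 0) = u) := by
    rintro ⟨σ, v⟩
    rw [hP]
    simp only [RecAux.plc_ins hm, RecAux.puc_ins hm]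
  -- step 3: fiberwise count over the second coordinate
  set g : Fin (m + 1) → ℕ := fun v =>
    (univ.filter fun σ : Equiv.Perm (Fin m) =>
      properLowerCount σ + (if v = 0 then 1 else 0) = ℓ ∧
      properUpperCount σ + (if v = Fin.last m then 1 else 0) = u).card with hg
  have step3 : A (m + 1) ℓ u = ∑ v : Fin (m + 1), g v := by
    rw [step1]
    rw [Finset.card_eq_sum_card_fiberwise
      (f := Prod.snd) (t := (univ : Finset (Fin (m + 1)))) (fun _ _ => Finset.mem_univ _)]
    refine Finset.sum_congr rfl ?_
    intro v _
    rw [hg]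
    refine Finset.card_bij' (fun p _ => p.1) (fun σ _ => (σ, v)) ?_ ?_ ?_ ?_
    · rintro ⟨σ, w⟩ hp
      simp only [Finset.mem_filter, Finset.mem_univ, true_and] at hp ⊢
      obtain ⟨h1, h2⟩ := hp
      subst h2
      exact (step2 (σ, w)).mp h1
    · intro σ hσ
      simp only [Finset.mem_filter, Finset.mem_univ, true_and] at hσ
      exact Finset.mem_filter.mpr
        ⟨Finset.mem_filter.mpr ⟨Finset.mem_univ _, (step2 (σ, v)).mpr hσ⟩, rfl⟩
    · rintro ⟨σ, w⟩ hp
      simp only [Finset.mem_filter, Finset.mem_univ, true_and] at hp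
      simp [hp.2]
    · intro σ _
      rfl
  -- evaluate g at special points
  have hne : (0 : Fin (m + 1)) ≠ Fin.last m := by
    intro h
    have := congrArg Fin.val h
    simp at this
    omega
  have g0 : g 0 = if 1 ≤ ℓ then A m (ℓ - 1) u else 0 := by
    rw [hg]
    by_cases hℓ : 1 ≤ ℓ
    · rw [if_pos hℓ, A]
      refine congrArg Finset.card ?_
      ext σ
      simp only [Finset.mem_filter, Finset.mem_univ, true_and]
      rw [if_pos trivial, if_neg hne]
      omega
    · rw [if_neg hℓ, Finset.card_eq_zero, Finset.filter_eq_empty_iff]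
      intro σ _
      rw [if_pos rfl, if_neg hne]
      omega
  have hne' : Fin.last m ≠ (0 : Fin (m + 1)) := hne.symm
  have glast : g (Fin.last m) = if 1 ≤ u then A m ℓ (u - 1) else 0 := by
    rw [hg]
    by_cases hu : 1 ≤ u
    · rw [if_pos hu, A]
      refine congrArg Finset.card ?_
      ext σ
      simp only [Finset.mem_filter, Finset.mem_univ, true_and]
      rw [if_pos trivial, if_neg hne']
      omega
    · rw [if_neg hu, Finset.card_eq_zero, Finset.filter_eq_empty_iff]
      intro σ _
      rw [if_pos rfl, if_neg hne']
      omega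
  have gother : ∀ v : Fin (m + 1), v ≠ 0 → v ≠ Fin.last m → g v = A m ℓ u := by
    intro v h0 hl
    rw [hg, A]
    simp [if_neg h0, if_neg hl]
  -- put everything together
  have hsub : ({0, Fin.last m} : Finset (Fin (m + 1))) ⊆ univ := Finset.subset_univ _
  have hsplit : ∑ v : Fin (m + 1), g v =
      ∑ v ∈ (univ \ {0, Fin.last m} : Finset (Fin (m + 1))), g v + ∑ v ∈ ({0, Fin.last m} : Finset (Fin (m + 1))), g v :=
    (Finset.sum_sdiff hsub).symm
  have hpair : ∑ v ∈ ({0, Fin.last m} : Finset (Fin (m + 1))), g v = g 0 + g (Fin.last m) :=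
    Finset.sum_pair hne
  have hconst : ∑ v ∈ (univ \ {0, Fin.last m} : Finset (Fin (m + 1))), g v
      = (m - 1) * A m ℓ u := by
    rw [Finset.sum_congr rfl (fun v hv => ?_), Finset.sum_const, smul_eq_mul]
    · congr 1
      rw [Finset.card_sdiff_of_subset hsub]
      rw [Finset.card_univ]
      simp [Finset.card_pair hne]
    · simp only [Finset.mem_sdiff, Finset.mem_univ, true_and, Finset.mem_insert,
        Finset.mem_singleton, not_or] at hv
      exact gother v hv.1 hv.2
  rw [step3, hsplit, hpair, hconst, g0, glast]
  ring

theorem stmt_0 (n ℓ u : ℕ) (hn : 2 ≤ n) :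
    A n ℓ u = (if 1 ≤ ℓ then A (n - 1) (ℓ - 1) u else 0)
      + (if 1 ≤ u then A (n - 1) ℓ (u - 1) else 0)
      + (n - 2) * A (n - 1) ℓ u := by
  obtain ⟨m, rfl⟩ : ∃ m, n = m + 1 := ⟨n - 1, by omega⟩
  have hm : 1 ≤ m := by omega
  have h1 : m + 1 - 1 = m := rfl
  have h2 : m + 1 - 2 = m - 1 := by omega
  rw [h1, h2]
  exact key_rec m ℓ u hm
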